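/- Define G : [0, 1/11] → ℝ by G(s) = (s/(4·(1 − (3/4)s)))·(1 − log(1 − (3/4)s)) + ((1 + s)·log(1 − s))/(4·(1 − s)) − (1/6)·log(1 − (3/4)s). Then G(s) ≥ s/10 for all s ∈ [0, 1/11]. -/

import Mathlib

open Real Set

-- Upper bound: log(1-t) ≤ -t - t^2/2 on [0, 1/2]
lemma log_one_sub_le (t : ℝ) (h0 : 0 ≤ t) (h1 : t ≤ 1/2) :
    Real.log (1 - t) ≤ -t - t^2/2 := by
  have hd : ∀ x ∈ Ioo (0:ℝ) (1/2),
      HasDerivAt (fun x : ℝ => Real.log (1 - x) + x + x^2/2)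
        (1/(1-x) * (-1) + 1 + x) x := by
    intro x hx
    have hne : (1 : ℝ) - x ≠ 0 := by nlinarith [hx.1, hx.2]
    have hD1 : HasDerivAt (fun x : ℝ => 1 - x) (-1) x := by
      simpa using (hasDerivAt_id x).const_sub 1
    have h2 : HasDerivAt (fun x : ℝ => Real.log (1 - x)) (1/(1-x) * (-1)) x := by
      simpa [one_div, Function.comp_def] using (Real.hasDerivAt_log hne).comp x hD1
    have h3 : HasDerivAt (fun x : ℝ => x^2/2) x x := by
      simpa using ((hasDerivAt_pow 2 x).div_const 2)
    exact (h2.add (hasDerivAt_id' x)).add h3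
  have hA : AntitoneOn (fun x : ℝ => Real.log (1 - x) + x + x^2/2) (Icc 0 (1/2)) := by
    apply antitoneOn_of_deriv_nonpos (convex_Icc _ _)
    · apply ContinuousOn.add
      apply ContinuousOn.add
      · apply ContinuousOn.log (by fun_prop)
        intro x hx
        simp only [mem_Icc] at hx
        nlinarith [hx.1, hx.2]
      · fun_prop
      · fun_prop
    · intro x hx
      rw [interior_Icc] at hx
      exact ((hd x hx).differentiableAt).differentiableWithinAt
    · intro x hx
      rw [interior_Icc] at hx
      rw [(hd x hx).deriv]
      have hx1 : x < 1/2 := hx.2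
      have hx0 : 0 < x := hx.1
      have hpos : (0:ℝ) < 1 - x := by linarith
      have heq : 1/(1-x) * (-1) + 1 + x = -(x^2/(1-x)) := by
        field_simp; ring
      rw [heq]
      have : 0 ≤ x^2/(1-x) := by positivity
      linarith
  have h := hA (show (0:ℝ) ∈ Icc (0:ℝ) (1/2) by constructor <;> norm_num)
    (show t ∈ Icc (0:ℝ) (1/2) from ⟨h0, h1⟩) h0
  simp only [Real.log_one] at h
  norm_num at h
  linarith

-- Lower bound: log(1-t) ≥ -(t*(2-t))/(2*(1-t)) on [0, 1/2]
lemma log_one_sub_ge (t : ℝ) (h0 : 0 ≤ t) (h1 : t ≤ 1/2) :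
    Real.log (1 - t) ≥ -(t*(2-t))/(2*(1-t)) := by
  have hd : ∀ x ∈ Ioo (0:ℝ) (1/2),
      HasDerivAt (fun x : ℝ => Real.log (1 - x) + (x*(2-x))/(2*(1-x)))
        (1/(1-x) * (-1) +
          (((1*(2-x) + x*(-1))*(2*(1-x)) - (x*(2-x))*(2*(-1))) / (2*(1-x))^2)) x := by
    intro x hx
    have hne : (1 : ℝ) - x ≠ 0 := by nlinarith [hx.1, hx.2]
    have hne2 : (2 : ℝ) * (1 - x) ≠ 0 := by
      intro h; apply hne; linarith [h]
    have hD1 : HasDerivAt (fun x : ℝ => 1 - x) (-1) x := by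
      simpa using (hasDerivAt_id x).const_sub 1
    have h2 : HasDerivAt (fun x : ℝ => Real.log (1 - x)) (1/(1-x) * (-1)) x := by
      simpa [one_div, Function.comp_def] using (Real.hasDerivAt_log hne).comp x hD1
    have hnum : HasDerivAt (fun x : ℝ => x*(2-x)) (1*(2-x) + x*(-1)) x := by
      exact (hasDerivAt_id x).mul ((hasDerivAt_id x).const_sub 2)
    have hden : HasDerivAt (fun x : ℝ => 2*(1-x)) (2*(-1)) x := by
      exact hD1.const_mul 2
    exact h2.add (hnum.div hden hne2)
  have hM : MonotoneOn (fun x : ℝ => Real.log (1 - x) + (x*(2-x))/(2*(1-x))) (Icc 0 (1/2)) := by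
    apply monotoneOn_of_deriv_nonneg (convex_Icc _ _)
    · apply ContinuousOn.add
      · apply ContinuousOn.log (by fun_prop)
        intro x hx
        simp only [mem_Icc] at hx
        nlinarith [hx.1, hx.2]
      · apply ContinuousOn.div (by fun_prop) (by fun_prop)
        intro x hx
        simp only [mem_Icc] at hx
        intro h
        nlinarith [hx.1, hx.2]
    · intro x hx
      rw [interior_Icc] at hx
      exact ((hd x hx).differentiableAt).differentiableWithinAt
    · intro x hx
      rw [interior_Icc] at hx
      rw [(hd x hx).deriv]
      have hx1 : x < 1/2 := hx.2
      have hx0 : 0 < x := hx.1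
      have hpos : (0:ℝ) < 1 - x := by linarith
      have heq : 1/(1-x) * (-1) +
          (((1*(2-x) + x*(-1))*(2*(1-x)) - (x*(2-x))*(2*(-1))) / (2*(1-x))^2)
          = x^2/(2*(1-x)^2) := by
        field_simp; ring
      rw [heq]
      positivity
  have h := hM (show (0:ℝ) ∈ Icc (0:ℝ) (1/2) by constructor <;> norm_num)
    (show t ∈ Icc (0:ℝ) (1/2) from ⟨h0, h1⟩) h0
  simp only [Real.log_one] at h
  norm_num at h
  rw [ge_iff_le, neg_div, neg_le]
  have : -Real.log (1 - t) ≤ t * (2 - t) / (2 * (1 - t)) := by linarith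
  linarith

/-- The function G(s) appearing in the monotonicity proof satisfies
G(s) ≥ s/10 on [0, 1/11]. -/
theorem G_lower_bound :
    ∀ s ∈ Icc (0:ℝ) (1 / 11),
      s / (4 * (1 - 3 / 4 * s)) * (1 - Real.log (1 - 3 / 4 * s))
          + (1 + s) * Real.log (1 - s) / (4 * (1 - s))
          - 1 / 6 * Real.log (1 - 3 / 4 * s) ≥ s / 10 := by
  rintro s ⟨hs0, hs1⟩
  have h1 : (0:ℝ) < 1 - 3/4*s := by linarith
  have h2 : (0:ℝ) < 1 - s := by linarith
  have h1' : (1:ℝ) - 3/4*s ≠ 0 := h1.ne'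
  have h2' : (1:ℝ) - s ≠ 0 := h2.ne'
  have ha : Real.log (1 - 3/4*s) ≤ -(3/4*s) - (3/4*s)^2/2 :=
    log_one_sub_le (3/4*s) (by linarith) (by linarith)
  have hb : Real.log (1 - s) ≥ -(s*(2-s))/(2*(1-s)) :=
    log_one_sub_ge s hs0 (by linarith)
  set a := Real.log (1 - 3/4*s) with hadef
  set b := Real.log (1 - s) with hbdef
  have e4 : (4:ℝ) * (1 - 3/4*s) = 4 - 3*s := by ring
  have h4 : (0:ℝ) < 4 - 3*s := by linarith
  have h4' : (4:ℝ) - 3*s ≠ 0 := h4.ne'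
  have hT1 : s / (4 * (1 - 3/4*s)) * (1 - a) ≥
      s / (4 - 3*s) * (1 + 3/4*s + (3/4*s)^2/2) := by
    rw [e4]
    apply mul_le_mul_of_nonneg_left (by linarith) (by positivity)
  have hT2 : (1 + s) * b / (4 * (1 - s)) ≥
      (1 + s) * (-(s*(2-s))/(2*(1-s))) / (4 * (1 - s)) := by
    gcongr
  have hT3 : - (1/6 * a) ≥ 1/6 * (3/4*s + (3/4*s)^2/2) := by nlinarith
  have hpoly : s / (4 - 3*s) * (1 + 3/4*s + (3/4*s)^2/2)
      + (1 + s) * (-(s*(2-s))/(2*(1-s))) / (4 * (1 - s))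
      + 1/6 * (3/4*s + (3/4*s)^2/2) ≥ s / 10 := by
    rw [ge_iff_le, ← sub_nonneg]
    have hexp : s / (4 - 3*s) * (1 + 3/4*s + (3/4*s)^2/2)
      + (1 + s) * (-(s*(2-s))/(2*(1-s))) / (4 * (1 - s))
      + 1/6 * (3/4*s + (3/4*s)^2/2) - s / 10
      = (s * (12 - 261/2*s + 375/8*s^2 + 99/4*s^3 + 135/8*s^4))
          / (120 * (4 - 3*s) * (1 - s)^2) := by
      have h4s : (4:ℝ) - s * 3 ≠ 0 := by intro h; linarith
      field_simp
      ring
    rw [hexp]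
    apply div_nonneg _ (by positivity)
    apply mul_nonneg hs0
    nlinarith [mul_nonneg hs0 hs0, mul_nonneg (mul_nonneg hs0 hs0) hs0,
      mul_nonneg (mul_nonneg (mul_nonneg hs0 hs0) hs0) hs0]
  linarith [hT1, hT2, hT3, hpoly]
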